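/- Let $a \in \R^{n\times N}$ and let $G$ be a finite collection of maps $g:\{1,\dots,n\}\to\{1,\dots,N\}$ with uniform probability $\Pro$, satisfying $\Pro(g(i)=j)=1/N$ for all $i,j$ and $\Pro(g(i_1)=j_1, g(i_2)=j_2) \le C_G/N^2$ for all distinct pairs $(i_1,j_1)\ne(i_2,j_2)$, where $C_G \ge 1$. Then for every $\ell \le n$, $\frac{1}{32(1+2C_G)^2} \cdot \frac{1}{N}\sum_{j=1}^{\ell N} s(j) \le \int_G \sum_{k=1}^{\ell} \kmax_{1\le i\le n} |a_{i g(i)}| \, d\Pro(g) \le \frac{2}{N}\sum_{j=1}^{\ell N} s(j)$, where $s(1) \ge s(2) \ge \dots \ge s(nN)$ is the decreasing rearrangement of $(|a_{ij}|)$ and $\kmax$ denotes the $k$-th largest value among $|a_{1g(1)}|,\dots,|a_{ng(n)}|$. -/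

import Mathlib

open List Finset

/-- `kmax x k` is the `k`-th largest entry (1-indexed) of the vector `x`. -/
noncomputable def kmax {n : ℕ} (x : Fin n → ℝ) (k : ℕ) : ℝ :=
  ((List.ofFn x).mergeSort (fun a b => decide (b ≤ a))).getD (k - 1) 0

/-- `smat a k` is the `k`-th largest entry (1-indexed) of `(|a i j|)`. -/
noncomputable def smat {n N : ℕ} (a : Fin n → Fin N → ℝ) (k : ℕ) : ℝ :=
  (((Finset.univ : Finset (Fin n × Fin N)).toList.map
      (fun p => |a p.1 p.2|)).mergeSort (fun a b => decide (b ≤ a))).getD (k - 1) 0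


lemma mergeSortDesc_sorted (l : List ℝ) :
    (l.mergeSort (fun a b => decide (b ≤ a))).Pairwise (· ≥ ·) := by
  have h := List.pairwise_mergeSort (le := fun a b : ℝ => decide (b ≤ a))
    (by intro a b c h1 h2; simp only [decide_eq_true_eq] at *; exact le_trans h2 h1)
    (by intro a b; simpa using le_total b a) l
  simpa using h

lemma getD_nonneg {l : List ℝ} (h : ∀ y ∈ l, 0 ≤ y) (k : ℕ) : 0 ≤ l.getD k 0 := by
  by_cases hk : k < l.length
  · rw [l.getD_eq_getElem 0 hk]
    exact h _ (l.getElem_mem hk)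
  · rw [List.getD_eq_default _ _ (not_lt.1 hk)]

lemma getD_anti {l : List ℝ} (hs : l.Pairwise (· ≥ ·)) (h0 : ∀ y ∈ l, 0 ≤ y)
    {i j : ℕ} (hij : i ≤ j) : l.getD j 0 ≤ l.getD i 0 := by
  by_cases hj : j < l.length
  · have hi : i < l.length := lt_of_le_of_lt hij hj
    rw [l.getD_eq_getElem 0 hi, l.getD_eq_getElem 0 hj]
    rcases eq_or_lt_of_le hij with rfl | h
    · rfl
    · exact List.Pairwise.rel_get_of_lt hs (by simpa using h)
  · rw [List.getD_eq_default _ _ (not_lt.1 hj)]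
    exact getD_nonneg h0 i

lemma sum_range_getD (l : List ℝ) (f : ℝ → ℝ) :
    ∑ k ∈ Finset.range l.length, f (l.getD k 0) = (l.map f).sum := by
  induction l with
  | nil => simp
  | cons a l ih =>
    rw [List.length_cons, Finset.sum_range_succ']
    simp only [List.getD_cons_succ, List.getD_cons_zero, ih]
    simp [add_comm]

lemma sum_range_getD_take (l : List ℝ) (c : ℕ) :
    ∑ k ∈ Finset.range c, l.getD k 0 = (l.take c).sum := by
  induction c with
  | zero => simp
  | succ c ih =>
    rw [Finset.sum_range_succ, ih, List.take_succ]
    simp [List.getD_eq_getElem?_getD]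
    cases l[c]? <;> simp

lemma take_sum_cons_le {a : ℝ} {l : List ℝ} (ha0 : 0 ≤ a) (hal : ∀ y ∈ l, y ≤ a) (c : ℕ) :
    (l.take c).sum ≤ ((a :: l).take c).sum := by
  cases c with
  | zero => simp
  | succ k =>
    rw [List.take_succ_cons, List.sum_cons, List.take_succ, List.sum_append]
    have hopt : (l[k]?).toList.sum ≤ a := by
      cases hk : l[k]? with
      | none => simpa using ha0
      | some y =>
        simp only [hk, Option.toList_some, List.sum_cons, List.sum_nil, add_zero]
        exact hal y (List.mem_of_getElem? hk)
    linarith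

lemma sum_le_take_sum : ∀ (l : List ℝ), l.Pairwise (· ≥ ·) → (∀ y ∈ l, 0 ≤ y) →
    ∀ (M : List ℝ), M <+~ l → M.sum ≤ (l.take M.length).sum := by
  intro l
  induction l with
  | nil => intro _ _ M hM; simp at hM; simp [hM]
  | cons a l ih =>
    intro hs h0 M hM
    have hal : ∀ y ∈ l, y ≤ a := by
      intro y hy; exact (List.pairwise_cons.1 hs).1 y hy
    have ha0 : 0 ≤ a := h0 a (by simp)
    have hl0 : ∀ y ∈ l, 0 ≤ y := fun y hy => h0 y (by simp [hy])
    have hls : l.Pairwise (· ≥ ·) := (List.pairwise_cons.1 hs).2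
    by_cases hmem : a ∈ M
    · have hM' : a :: M.erase a <+~ a :: l :=
        ((List.perm_cons_erase hmem).subperm_right).mp hM
      have hMe : M.erase a <+~ l := (List.subperm_cons a).1 hM'
      have hlen : M.length = (M.erase a).length + 1 := by
        rw [List.length_erase_of_mem hmem]
        have : M.length ≠ 0 := by simp [List.length_eq_zero_iff]; rintro rfl; simp at hmem
        omega
      have hsum : M.sum = a + (M.erase a).sum := by
        rw [(List.perm_cons_erase hmem).sum_eq, List.sum_cons]
      rw [hsum, hlen, List.take_succ_cons, List.sum_cons]
      exact add_le_add_right (ih hls hl0 _ hMe) a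
    · have hMl : M <+~ l := by
        obtain ⟨M', hp, hsub⟩ := hM
        rcases List.sublist_cons_iff.1 hsub with h | ⟨r, rfl, hr⟩
        · exact ⟨M', hp, h⟩
        · exact absurd (hp.mem_iff.1 (by simp)) hmem
      exact (ih hls hl0 M hMl).trans (take_sum_cons_le ha0 hal M.length)



lemma ofFn_abs_nonneg {n : ℕ} (x : Fin n → ℝ) (hx : ∀ i, 0 ≤ x i) :
    ∀ y ∈ (List.ofFn x).mergeSort (fun a b => decide (b ≤ a)), 0 ≤ y := by
  intro y hy
  rw [List.mem_mergeSort, List.mem_ofFn] at hy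
  obtain ⟨i, rfl⟩ := hy
  exact hx i

lemma topsum_eq {n : ℕ} (x : Fin n → ℝ) (c : ℕ) :
    ∑ k ∈ Finset.range c, kmax x (k + 1)
      = (((List.ofFn x).mergeSort (fun a b => decide (b ≤ a))).take c).sum := by
  rw [← sum_range_getD_take]
  simp [kmax]

lemma univ_toList_perm_finRange (n : ℕ) :
    (Finset.univ : Finset (Fin n)).toList.Perm (List.finRange n) := by
  have : ((Finset.univ : Finset (Fin n)).toList : Multiset (Fin n))
      = ((List.finRange n : List (Fin n)) : Multiset (Fin n)) := by
    rw [Finset.coe_toList, Fin.univ_def]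
  exact Multiset.coe_eq_coe.mp this

lemma sum_finset_le_topsum {n : ℕ} (x : Fin n → ℝ) (hx : ∀ i, 0 ≤ x i) (c : ℕ)
    (R : Finset (Fin n)) (hR : R.card ≤ c) :
    ∑ i ∈ R, x i ≤ ∑ k ∈ Finset.range c, kmax x (k + 1) := by
  set lx := (List.ofFn x).mergeSort (fun a b => decide (b ≤ a)) with hlx
  have hnn : ∀ y ∈ lx, 0 ≤ y := ofFn_abs_nonneg x hx
  have hsort : lx.Pairwise (· ≥ ·) := mergeSortDesc_sorted _
  have hperm : lx.Perm ((List.finRange n).map x) := by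
    refine (List.mergeSort_perm _ _).trans ?_
    rw [List.ofFn_eq_map]
  have hsub : (R.toList.map x) <+~ lx := by
    have h1 : R.toList <+~ List.finRange n :=
      List.subperm_of_subset (Finset.nodup_toList R) (fun y _ => List.mem_finRange y)
    obtain ⟨L, hLp, hLs⟩ := h1
    have : (R.toList.map x) <+~ ((List.finRange n).map x) :=
      ⟨L.map x, hLp.map x, hLs.map x⟩
    exact (hperm.symm.subperm_left).mp this
  have h2 := sum_le_take_sum lx hsort hnn _ hsub
  have hlen : (R.toList.map x).length = R.card := by simp
  have hsumR : ∑ i ∈ R, x i = (R.toList.map x).sum := (Finset.sum_map_toList R x).symm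
  rw [topsum_eq, hsumR]
  refine h2.trans ?_
  rw [← sum_range_getD_take, ← sum_range_getD_take, hlen]
  refine Finset.sum_le_sum_of_subset_of_nonneg (Finset.range_subset_range.2 hR) ?_
  intro k _ _
  exact getD_nonneg hnn k

lemma fiber_sum {n N : ℕ} (G : Finset (Fin n → Fin N)) (i : Fin n) (φ : Fin N → ℝ) :
    ∑ g ∈ G, φ (g i) = ∑ j : Fin N, ((G.filter fun g => g i = j).card : ℝ) * φ j := by
  rw [← Finset.sum_fiberwise G (fun g => g i) (fun g => φ (g i))]
  refine Finset.sum_congr rfl (fun j _ => ?_)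
  rw [Finset.sum_congr rfl (fun g hg => ?_), Finset.sum_const, nsmul_eq_mul]
  rw [(Finset.mem_filter.1 hg).2]


lemma upper_main {n N ℓ : ℕ} (hℓ : ℓ ≤ n) (hN : 0 < N) (hl1 : 1 ≤ ℓ)
    (a : Fin n → Fin N → ℝ) (G : Finset (Fin n → Fin N)) (hG : G.Nonempty)
    (h1 : ∀ i : Fin n, ∀ j : Fin N,
      ((G.filter fun g => g i = j).card : ℝ) / G.card = 1 / N) :
    ∑ g ∈ G, ∑ k ∈ Finset.range ℓ, kmax (fun i => |a i (g i)|) (k + 1)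
      ≤ (2 / N) * (∑ j ∈ Finset.range (ℓ * N), smat a (j + 1)) * G.card := by
  have hM : (0:ℝ) < G.card := by exact_mod_cast Finset.card_pos.2 hG
  have hN' : (0:ℝ) < N := by exact_mod_cast hN
  have hcard : ∀ i : Fin n, ∀ j : Fin N,
      ((G.filter fun g => g i = j).card : ℝ) = G.card / N := by
    intro i j
    have h := h1 i j
    rw [div_eq_div_iff hM.ne' hN'.ne'] at h
    field_simp
    linarith
  set f : Fin n × Fin N → ℝ := fun p => |a p.1 p.2| with hf
  set x : (Fin n → Fin N) → Fin n → ℝ := fun g i => |a i (g i)| with hx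
  set ls := (((Finset.univ : Finset (Fin n × Fin N)).toList.map f).mergeSort
      (fun a b => decide (b ≤ a))) with hls
  have hlen : ls.length = n * N := by
    rw [hls, List.length_mergeSort, List.length_map, Finset.length_toList]
    simp
  have hnn : ∀ y ∈ ls, 0 ≤ y := by
    intro y hy
    rw [hls, List.mem_mergeSort, List.mem_map] at hy
    obtain ⟨p, _, rfl⟩ := hy
    exact abs_nonneg _
  have hsorted : ls.Pairwise (· ≥ ·) := mergeSortDesc_sorted _
  have hsmat : ∀ j : ℕ, smat a (j + 1) = ls.getD j 0 := by
    intro j; simp [smat, hls, hf]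
  set t := smat a (ℓ * N) with htdef
  have ht_eq : t = ls.getD (ℓ * N - 1) 0 := by simp [smat, htdef, hls, hf]
  have ht0 : 0 ≤ t := by rw [ht_eq]; exact getD_nonneg hnn _
  set φ : ℝ → ℝ := fun v => max (v - t) 0 with hφ
  have hφ0 : ∀ v, 0 ≤ φ v := fun v => le_max_right _ _
  have hφle : ∀ v, 0 ≤ v → φ v ≤ v := by
    intro v hv
    simp only [hφ, max_le_iff]
    constructor <;> linarith
  set S := ∑ j ∈ Finset.range (ℓ * N), smat a (j + 1) with hS
  -- Step U : pointwise bound for each g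
  have stepU : ∀ g : Fin n → Fin N,
      (∑ k ∈ Finset.range ℓ, kmax (x g) (k + 1)) ≤ (∑ i, φ (x g i)) + ℓ * t := by
    intro g
    set lx := (List.ofFn (x g)).mergeSort (fun a b => decide (b ≤ a)) with hlx
    have hlxnn : ∀ y ∈ lx, 0 ≤ y := ofFn_abs_nonneg (x g) (fun i => abs_nonneg _)
    have hlxlen : lx.length = n := by
      rw [hlx, List.length_mergeSort, List.length_ofFn]
    have e1 : ∑ k ∈ Finset.range ℓ, kmax (x g) (k + 1)
        = ∑ k ∈ Finset.range ℓ, lx.getD k 0 := by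
      simp [kmax, hlx]
    have e2 : ∑ k ∈ Finset.range ℓ, lx.getD k 0
        ≤ ∑ k ∈ Finset.range ℓ, (φ (lx.getD k 0) + t) := by
      refine Finset.sum_le_sum (fun k _ => ?_)
      have : lx.getD k 0 - t ≤ φ (lx.getD k 0) := le_max_left _ _
      linarith
    have e3 : ∑ k ∈ Finset.range ℓ, (φ (lx.getD k 0) + t)
        = (∑ k ∈ Finset.range ℓ, φ (lx.getD k 0)) + ℓ * t := by
      rw [Finset.sum_add_distrib, Finset.sum_const, Finset.card_range, nsmul_eq_mul]
    have e4 : ∑ k ∈ Finset.range ℓ, φ (lx.getD k 0)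
        ≤ ∑ k ∈ Finset.range n, φ (lx.getD k 0) :=
      Finset.sum_le_sum_of_subset_of_nonneg (Finset.range_subset_range.2 hℓ)
        (fun k _ _ => hφ0 _)
    have e5 : ∑ k ∈ Finset.range n, φ (lx.getD k 0) = ∑ i, φ (x g i) := by
      have hr : Finset.range n = Finset.range lx.length := by rw [hlxlen]
      rw [hr, sum_range_getD lx φ]
      have hp : (lx.map φ).Perm ((List.ofFn (x g)).map φ) :=
        (List.mergeSort_perm _ _).map φ
      rw [hp.sum_eq, List.map_ofFn, List.sum_ofFn]
      rfl
    rw [e1]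
    calc ∑ k ∈ Finset.range ℓ, lx.getD k 0
        ≤ ∑ k ∈ Finset.range ℓ, (φ (lx.getD k 0) + t) := e2
      _ = (∑ k ∈ Finset.range ℓ, φ (lx.getD k 0)) + ℓ * t := e3
      _ ≤ (∑ i, φ (x g i)) + ℓ * t := by
          refine add_le_add_left (e4.trans (le_of_eq e5)) _
  -- sum over g
  have sum1 : ∑ g ∈ G, ∑ i, φ (x g i)
      = (G.card / N) * ∑ p : Fin n × Fin N, φ (f p) := by
    rw [Finset.sum_comm]
    have : ∀ i : Fin n, ∑ g ∈ G, φ (x g i)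
        = (G.card / N) * ∑ j : Fin N, φ (|a i j|) := by
      intro i
      have := fiber_sum G i (fun j => φ (|a i j|))
      rw [show (∑ g ∈ G, φ (x g i)) = ∑ g ∈ G, (fun j => φ (|a i j|)) (g i) from rfl, this]
      rw [Finset.mul_sum]
      refine Finset.sum_congr rfl (fun j _ => ?_)
      rw [hcard i j]
    rw [Finset.sum_congr rfl (fun i _ => this i), ← Finset.mul_sum]
    rw [Fintype.sum_prod_type]
  have hΦ : ∑ p : Fin n × Fin N, φ (f p) ≤ S := by
    have e1 : ∑ p : Fin n × Fin N, φ (f p) = ∑ j ∈ Finset.range (n * N), φ (ls.getD j 0) := by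
      have hr : Finset.range (n * N) = Finset.range ls.length := by rw [hlen]
      rw [hr, sum_range_getD ls φ]
      have hp : (ls.map φ).Perm (((Finset.univ : Finset (Fin n × Fin N)).toList.map f).map φ) :=
        (List.mergeSort_perm _ _).map φ
      rw [hp.sum_eq, List.map_map, Finset.sum_map_toList]
      rfl
    have e2 : ∑ j ∈ Finset.range (ℓ * N), φ (ls.getD j 0)
        = ∑ j ∈ Finset.range (n * N), φ (ls.getD j 0) := by
      refine Finset.sum_subset (Finset.range_subset_range.2 (Nat.mul_le_mul_right N hℓ)) ?_
      intro j _ hj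
      rw [Finset.mem_range, not_lt] at hj
      have hle : ls.getD j 0 ≤ t := by
        rw [ht_eq]
        exact getD_anti hsorted hnn (by omega)
      simp only [hφ]
      rw [max_eq_right (by linarith)]
    rw [e1, ← e2]
    have step : ∑ j ∈ Finset.range (ℓ * N), φ (ls.getD j 0)
        ≤ ∑ j ∈ Finset.range (ℓ * N), ls.getD j 0 :=
      Finset.sum_le_sum (fun j _ => hφle _ (getD_nonneg hnn j))
    refine step.trans (le_of_eq ?_)
    rw [hS]
    exact Finset.sum_congr rfl (fun j _ => (hsmat j).symm)
  have hlt : (ℓ : ℝ) * t ≤ S / N := by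
    rw [le_div_iff₀ hN']
    have : ∑ j ∈ Finset.range (ℓ * N), t ≤ S := by
      rw [hS]
      refine Finset.sum_le_sum (fun j hj => ?_)
      rw [hsmat j, ht_eq]
      refine getD_anti hsorted hnn ?_
      rw [Finset.mem_range] at hj
      omega
    rw [Finset.sum_const, Finset.card_range, nsmul_eq_mul] at this
    calc (ℓ:ℝ) * t * N = ((ℓ * N : ℕ) : ℝ) * t := by push_cast; ring
      _ ≤ S := this
  have hS0 : 0 ≤ S := by
    rw [hS]
    refine Finset.sum_nonneg (fun j _ => ?_)
    rw [hsmat j]; exact getD_nonneg hnn _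
  calc ∑ g ∈ G, ∑ k ∈ Finset.range ℓ, kmax (fun i => |a i (g i)|) (k + 1)
      ≤ ∑ g ∈ G, ((∑ i, φ (x g i)) + ℓ * t) := Finset.sum_le_sum (fun g _ => stepU g)
    _ = (∑ g ∈ G, ∑ i, φ (x g i)) + G.card * (ℓ * t) := by
        rw [Finset.sum_add_distrib, Finset.sum_const, nsmul_eq_mul]
    _ = (G.card / N) * (∑ p : Fin n × Fin N, φ (f p)) + G.card * (ℓ * t) := by rw [sum1]
    _ ≤ (G.card / N) * S + G.card * (S / N) := by
        refine add_le_add ?_ ?_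
        · exact mul_le_mul_of_nonneg_left hΦ (by positivity)
        · exact mul_le_mul_of_nonneg_left hlt (le_of_lt hM)
    _ = (2 / N) * S * G.card := by field_simp; ring


set_option maxHeartbeats 1000000 in
lemma lower_main {n N ℓ : ℕ} (hℓ : ℓ ≤ n) (hN : 0 < N) (hl1 : 1 ≤ ℓ)
    (a : Fin n → Fin N → ℝ) (G : Finset (Fin n → Fin N)) (hG : G.Nonempty)
    (C : ℝ) (hC : 1 ≤ C)
    (h1 : ∀ i : Fin n, ∀ j : Fin N,
      ((G.filter fun g => g i = j).card : ℝ) / G.card = 1 / N)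
    (h2 : ∀ p q : Fin n × Fin N, p ≠ q →
      ((G.filter fun g => g p.1 = p.2 ∧ g q.1 = q.2).card : ℝ) / G.card
        ≤ C / (N : ℝ) ^ 2) :
    (1 / (32 * (1 + 2 * C) ^ 2)) * ((1 / N) * ∑ j ∈ Finset.range (ℓ * N), smat a (j + 1))
      * G.card
      ≤ ∑ g ∈ G, ∑ k ∈ Finset.range ℓ, kmax (fun i => |a i (g i)|) (k + 1) := by
  have hM : (0:ℝ) < G.card := by exact_mod_cast Finset.card_pos.2 hG
  have hN' : (0:ℝ) < N := by exact_mod_cast hN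
  have hn : 0 < n := lt_of_lt_of_le hl1 hℓ
  have hC0 : (0:ℝ) < C := lt_of_lt_of_le one_pos hC
  have hl1' : (0:ℝ) < ℓ := by exact_mod_cast hl1
  have hcard : ∀ i : Fin n, ∀ j : Fin N,
      ((G.filter fun g => g i = j).card : ℝ) = G.card / N := by
    intro i j
    have h := h1 i j
    rw [div_eq_div_iff hM.ne' hN'.ne'] at h
    field_simp
    linarith
  set f : Fin n × Fin N → ℝ := fun p => |a p.1 p.2| with hf
  set x : (Fin n → Fin N) → Fin n → ℝ := fun g i => |a i (g i)| with hx
  set ls := (((Finset.univ : Finset (Fin n × Fin N)).toList.map f).mergeSort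
      (fun a b => decide (b ≤ a))) with hls
  have hlen : ls.length = n * N := by
    rw [hls, List.length_mergeSort, List.length_map, Finset.length_toList]
    simp
  have hnn : ∀ y ∈ ls, 0 ≤ y := by
    intro y hy
    rw [hls, List.mem_mergeSort, List.mem_map] at hy
    obtain ⟨p, _, rfl⟩ := hy
    exact abs_nonneg _
  have hsorted : ls.Pairwise (· ≥ ·) := mergeSortDesc_sorted _
  have hsmat : ∀ j : ℕ, smat a (j + 1) = ls.getD j 0 := by
    intro j; simp [smat, hls, hf]
  set S := ∑ j ∈ Finset.range (ℓ * N), smat a (j + 1) with hS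
  -- the parameter m
  set m := ⌈(((ℓ * N : ℕ) : ℝ)) / (2 * C)⌉₊ with hm
  have hx0 : (0:ℝ) < ((ℓ * N : ℕ) : ℝ) := by
    have : 0 < ℓ * N := Nat.mul_pos hl1 hN
    exact_mod_cast this
  have hm1 : 1 ≤ m := Nat.ceil_pos.2 (by positivity)
  have hmle : m ≤ ℓ * N := by
    rw [hm, Nat.ceil_le]
    exact div_le_self (le_of_lt hx0) (by linarith)
  have hmleN : m ≤ n * N := hmle.trans (Nat.mul_le_mul_right N hℓ)
  have hmub : ((m:ℝ) - 1) * C ≤ ((ℓ * N : ℕ) : ℝ) / 2 := by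
    have h := Nat.ceil_lt_add_one (le_of_lt (show (0:ℝ) < ((ℓ * N : ℕ) : ℝ) / (2 * C) by positivity))
    rw [← hm] at h
    have h' : (m:ℝ) - 1 ≤ ((ℓ * N : ℕ) : ℝ) / (2 * C) := by linarith
    calc ((m:ℝ) - 1) * C ≤ (((ℓ * N : ℕ) : ℝ) / (2 * C)) * C := by
          refine mul_le_mul_of_nonneg_right h' (le_of_lt hC0)
      _ = ((ℓ * N : ℕ) : ℝ) / 2 := by field_simp
  have hmlb : ((ℓ * N : ℕ) : ℝ) ≤ 2 * C * m := by
    have h := Nat.le_ceil ((((ℓ * N : ℕ) : ℝ)) / (2 * C))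
    rw [← hm, div_le_iff₀ (by positivity)] at h
    linarith
  -- the sorted position list
  set Pl := ((Finset.univ : Finset (Fin n × Fin N)).toList).mergeSort
      (fun p q => decide (f q ≤ f p)) with hPl
  have hPperm : Pl.Perm (Finset.univ : Finset (Fin n × Fin N)).toList :=
    List.mergeSort_perm _ _
  have hPlen : Pl.length = n * N := by
    rw [hPperm.length_eq, Finset.length_toList]; simp
  have hPnd : Pl.Nodup := hPperm.nodup_iff.mpr (Finset.nodup_toList _)
  have hmap : Pl.map f = ls := by
    haveI : IsAntisymm ℝ (· ≥ ·) := ⟨fun a b h1 h2 => le_antisymm h2 h1⟩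
    refine List.Perm.eq_of_pairwise' ?_ hsorted ((hPperm.map f).trans (List.mergeSort_perm _ _).symm)
    have hps : Pl.Pairwise (fun p q => (decide (f q ≤ f p)) = true) := by
      refine List.pairwise_mergeSort ?_ ?_ _
      · intro p q u hpq hqu
        simp only [decide_eq_true_eq] at *
        exact le_trans hqu hpq
      · intro p q; simpa using le_total (f q) (f p)
    refine List.Pairwise.map f ?_ hps
    intro p q hpq
    simpa using hpq
  have hnN : 0 < n * N := Nat.mul_pos hn hN
  set d : Fin n × Fin N := (⟨0, hn⟩, ⟨0, hN⟩) with hd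
  set q : ℕ → Fin n × Fin N := fun j => Pl.getD j d with hq'
  have hqe : ∀ (j : ℕ) (h1 : j < Pl.length), q j = Pl[j] := by
    intro j h1
    show Pl.getD j d = Pl[j]
    exact List.getD_eq_getElem _ _ h1
  have hq : ∀ j, j < n * N → f (q j) = ls.getD j 0 := by
    intro j hj
    have h1 : j < Pl.length := by rw [hPlen]; exact hj
    have h2 : j < (Pl.map f).length := by rw [List.length_map]; exact h1
    rw [hqe j h1, ← hmap, List.getD_eq_getElem _ _ h2, List.getElem_map]
  have hqinj : ∀ j j', j < n * N → j' < n * N → q j = q j' → j = j' := by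
    intro j j' hj hj' heq
    have h1 : j < Pl.length := by rw [hPlen]; exact hj
    have h1' : j' < Pl.length := by rw [hPlen]; exact hj'
    rw [hqe j h1, hqe j' h1'] at heq
    exact (List.Nodup.getElem_inj_iff hPnd).mp heq
  clear hq' hqe
  clear_value q
  clear hPl hPperm hPnd hmap hPlen
  clear_value Pl
  clear Pl
  clear hls
  clear_value ls
  clear hm
  clear_value m
  -- Step A : deterministic bound for each g
  have stepA : ∀ g : Fin n → Fin N,
      ∑ j ∈ Finset.range m, (if g (q j).1 = (q j).2 ∧
          ((Finset.range j).filter (fun j' => g (q j').1 = (q j').2)).card < ℓ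
        then ls.getD j 0 else 0)
      ≤ ∑ k ∈ Finset.range ℓ, kmax (x g) (k + 1) := by
    intro g
    set T := (Finset.range m).filter (fun j => g (q j).1 = (q j).2 ∧
        ((Finset.range j).filter (fun j' => g (q j').1 = (q j').2)).card < ℓ) with hT
    have hTfacts : ∀ j ∈ T, j < m ∧ g (q j).1 = (q j).2 ∧
        ((Finset.range j).filter (fun j' => g (q j').1 = (q j').2)).card < ℓ := by
      intro j hj
      have := Finset.mem_filter.1 hj
      exact ⟨Finset.mem_range.1 this.1, this.2⟩
    have hLHS : ∑ j ∈ Finset.range m, (if g (q j).1 = (q j).2 ∧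
          ((Finset.range j).filter (fun j' => g (q j').1 = (q j').2)).card < ℓ
        then ls.getD j 0 else 0) = ∑ j ∈ T, ls.getD j 0 := (Finset.sum_filter _ _).symm
    have hTcard : T.card ≤ ℓ := by
      by_contra hcon
      push_neg at hcon
      have hne : T.Nonempty := Finset.card_pos.1 (by omega)
      set j0 := T.max' hne with hj0def
      have hj0 : j0 ∈ T := T.max'_mem hne
      have hj0P := hTfacts j0 hj0
      have hsub : T.erase j0 ⊆ (Finset.range j0).filter (fun j' => g (q j').1 = (q j').2) := by
        intro j hj
        have hj1 : j ≠ j0 := (Finset.mem_erase.1 hj).1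
        have hj2 : j ∈ T := (Finset.mem_erase.1 hj).2
        have hjP := hTfacts j hj2
        refine Finset.mem_filter.2 ⟨Finset.mem_range.2 ?_, hjP.2.1⟩
        have := T.le_max' j hj2
        omega
      have hcard2 := Finset.card_le_card hsub
      rw [Finset.card_erase_of_mem hj0] at hcard2
      have := hj0P.2.2
      omega
    have hjm : ∀ j ∈ T, j < n * N := fun j hj => lt_of_lt_of_le (hTfacts j hj).1 hmleN
    have hinj : ∀ j ∈ T, ∀ j' ∈ T, (q j).1 = (q j').1 → j = j' := by
      intro j hj j' hj' heq
      have h1 := (hTfacts j hj).2.1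
      have h2 := (hTfacts j' hj').2.1
      refine hqinj j j' (hjm j hj) (hjm j' hj') ?_
      refine Prod.ext heq ?_
      rw [← h1, ← h2, heq]
    have hsum : ∑ j ∈ T, ls.getD j 0 = ∑ i ∈ T.image (fun j => (q j).1), x g i := by
      rw [Finset.sum_image hinj]
      refine Finset.sum_congr rfl (fun j hj => ?_)
      rw [← hq j (hjm j hj)]
      show f (q j) = x g ((q j).1)
      rw [hf, hx]
      simp only
      rw [(hTfacts j hj).2.1]
    rw [hLHS, hsum]
    refine sum_finset_le_topsum (x g) (fun i => abs_nonneg _) ℓ _ ?_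
    exact le_trans (Finset.card_image_le) hTcard
  -- Step B : probabilistic lower bound on the good sets
  have stepB : ∀ j, j < m →
      (G.card : ℝ) / (2 * N) ≤ ((G.filter (fun g => g (q j).1 = (q j).2 ∧
        ((Finset.range j).filter (fun j' => g (q j').1 = (q j').2)).card < ℓ)).card : ℝ) := by
    intro j hj
    have hjnN : j < n * N := lt_of_lt_of_le hj hmleN
    set Gs := G.filter (fun g => g (q j).1 = (q j).2) with hGs
    set Good := G.filter (fun g => g (q j).1 = (q j).2 ∧
        ((Finset.range j).filter (fun j' => g (q j').1 = (q j').2)).card < ℓ) with hGood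
    set Bad := G.filter (fun g => g (q j).1 = (q j).2 ∧
        ¬ (((Finset.range j).filter (fun j' => g (q j').1 = (q j').2)).card < ℓ)) with hBad
    have hGscard : ((Gs.card : ℝ)) = G.card / N := hcard _ _
    have hsplit : Good.card + Bad.card = Gs.card := by
      rw [hGood, hBad, hGs, ← Finset.filter_filter, ← Finset.filter_filter]
      exact Finset.card_filter_add_card_filter_not _
    -- counting bound on Bad
    have hBadbound : (Bad.card : ℝ) * ℓ ≤ j * (C * G.card / N ^ 2) := by
      have key1 : Bad.card * ℓ ≤ ∑ g ∈ Bad,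
          ((Finset.range j).filter (fun j' => g (q j').1 = (q j').2)).card := by
        calc Bad.card * ℓ = ∑ _g ∈ Bad, ℓ := by rw [Finset.sum_const, smul_eq_mul]
          _ ≤ _ := by
              refine Finset.sum_le_sum (fun g hg => ?_)
              have := (Finset.mem_filter.1 hg).2.2
              omega
      have key2 : ∑ g ∈ Bad,
          ((Finset.range j).filter (fun j' => g (q j').1 = (q j').2)).card
          ≤ ∑ g ∈ Gs,
          ((Finset.range j).filter (fun j' => g (q j').1 = (q j').2)).card := by
        refine Finset.sum_le_sum_of_subset ?_
        rw [hBad, hGs]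
        intro g hg
        have := Finset.mem_filter.1 hg
        exact Finset.mem_filter.2 ⟨this.1, this.2.1⟩
      have key3 : ∑ g ∈ Gs,
          ((Finset.range j).filter (fun j' => g (q j').1 = (q j').2)).card
          = ∑ j' ∈ Finset.range j,
            (Gs.filter (fun g => g (q j').1 = (q j').2)).card := by
        calc ∑ g ∈ Gs, ((Finset.range j).filter (fun j' => g (q j').1 = (q j').2)).card
            = ∑ g ∈ Gs, ∑ j' ∈ Finset.range j,
                (if g (q j').1 = (q j').2 then 1 else 0) :=
              Finset.sum_congr rfl (fun g _ => Finset.card_filter _ _)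
          _ = ∑ j' ∈ Finset.range j, ∑ g ∈ Gs,
                (if g (q j').1 = (q j').2 then 1 else 0) := Finset.sum_comm
          _ = ∑ j' ∈ Finset.range j, (Gs.filter (fun g => g (q j').1 = (q j').2)).card :=
              Finset.sum_congr rfl (fun j' _ => (Finset.card_filter _ _).symm)
      have key4 : ∀ j' ∈ Finset.range j,
          ((Gs.filter (fun g => g (q j').1 = (q j').2)).card : ℝ)
            ≤ C * G.card / N ^ 2 := by
        intro j' hj'
        have hj'j : j' < j := Finset.mem_range.1 hj'
        have hj'nN : j' < n * N := lt_trans hj'j hjnN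
        have hne : q j ≠ q j' := by
          intro hcontra
          have hjj := hqinj j j' hjnN hj'nN hcontra
          exact absurd hjj (Ne.symm (Nat.ne_of_lt hj'j))
        have hh := h2 (q j) (q j') hne
        rw [div_le_iff₀ hM] at hh
        have heq : Gs.filter (fun g => g (q j').1 = (q j').2)
            = G.filter (fun g => g (q j).1 = (q j).2 ∧ g (q j').1 = (q j').2) := by
          rw [hGs, Finset.filter_filter]
        rw [heq]
        calc ((G.filter (fun g => g (q j).1 = (q j).2 ∧ g (q j').1 = (q j').2)).card : ℝ)
            ≤ C / N ^ 2 * G.card := hh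
          _ = C * G.card / N ^ 2 := by ring
      calc (Bad.card : ℝ) * ℓ ≤ ∑ g ∈ Bad,
            (((Finset.range j).filter (fun j' => g (q j').1 = (q j').2)).card : ℝ) := by
            exact_mod_cast key1
        _ ≤ ∑ g ∈ Gs,
            (((Finset.range j).filter (fun j' => g (q j').1 = (q j').2)).card : ℝ) := by
            exact_mod_cast key2
        _ = ∑ j' ∈ Finset.range j,
            ((Gs.filter (fun g => g (q j').1 = (q j').2)).card : ℝ) := by
            exact_mod_cast key3
        _ ≤ ∑ _j' ∈ Finset.range j, (C * G.card / N ^ 2) := Finset.sum_le_sum key4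
        _ = j * (C * G.card / N ^ 2) := by rw [Finset.sum_const, Finset.card_range, nsmul_eq_mul]
    -- hence Bad is small
    have hBadsmall : (Bad.card : ℝ) ≤ G.card / (2 * N) := by
      have hj' : (j : ℝ) ≤ (m : ℝ) - 1 := by
        have : j + 1 ≤ m := hj
        have : ((j+1 : ℕ) : ℝ) ≤ (m : ℝ) := by exact_mod_cast this
        push_cast at this
        linarith
      have step1 : (Bad.card : ℝ) * ℓ ≤ ((m:ℝ) - 1) * (C * G.card / N ^ 2) := by
        refine hBadbound.trans ?_
        refine mul_le_mul_of_nonneg_right hj' (by positivity)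
      have step2 : ((m:ℝ) - 1) * (C * G.card / N ^ 2) ≤ (((ℓ * N : ℕ):ℝ) / 2) * (G.card / N ^ 2) := by
        have : ((m:ℝ) - 1) * C ≤ ((ℓ * N : ℕ):ℝ) / 2 := hmub
        calc ((m:ℝ) - 1) * (C * G.card / N ^ 2)
            = (((m:ℝ) - 1) * C) * (G.card / N ^ 2) := by ring
          _ ≤ (((ℓ * N : ℕ):ℝ) / 2) * (G.card / N ^ 2) := by
              refine mul_le_mul_of_nonneg_right this (by positivity)
      have step3 : (((ℓ * N : ℕ):ℝ) / 2) * (G.card / N ^ 2) = (ℓ:ℝ) * (G.card / (2 * N)) := by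
        push_cast
        field_simp
      have : (Bad.card : ℝ) * ℓ ≤ (ℓ:ℝ) * (G.card / (2 * N)) := by
        rw [← step3]; exact step1.trans step2
      nlinarith [this, hl1']
    have hGoodcard : (Good.card : ℝ) = (Gs.card : ℝ) - Bad.card := by
      have : (Good.card : ℝ) + Bad.card = Gs.card := by exact_mod_cast hsplit
      linarith
    rw [hGoodcard, hGscard]
    have : (G.card : ℝ) / N - G.card / (2 * N) = G.card / (2 * N) := by
      field_simp
      ring
    linarith
  -- Step C : combine
  set Sm := ∑ j ∈ Finset.range m, ls.getD j 0 with hSm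
  have hSm0 : 0 ≤ Sm := Finset.sum_nonneg (fun j _ => getD_nonneg hnn j)
  have stepC : (G.card : ℝ) / (2 * N) * Sm
      ≤ ∑ g ∈ G, ∑ k ∈ Finset.range ℓ, kmax (x g) (k + 1) := by
    have hE1 : ∑ g ∈ G, ∑ j ∈ Finset.range m, (if g (q j).1 = (q j).2 ∧
          ((Finset.range j).filter (fun j' => g (q j').1 = (q j').2)).card < ℓ
        then ls.getD j 0 else 0)
        ≤ ∑ g ∈ G, ∑ k ∈ Finset.range ℓ, kmax (x g) (k + 1) :=
      Finset.sum_le_sum (fun g _ => stepA g)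
    have hE2 : ∑ g ∈ G, ∑ j ∈ Finset.range m, (if g (q j).1 = (q j).2 ∧
          ((Finset.range j).filter (fun j' => g (q j').1 = (q j').2)).card < ℓ
        then ls.getD j 0 else 0)
        = ∑ j ∈ Finset.range m, (ls.getD j 0) *
          ((G.filter (fun g => g (q j).1 = (q j).2 ∧
            ((Finset.range j).filter (fun j' => g (q j').1 = (q j').2)).card < ℓ)).card : ℝ) := by
      rw [Finset.sum_comm]
      refine Finset.sum_congr rfl (fun j _ => ?_)
      rw [← Finset.sum_filter, Finset.sum_const, nsmul_eq_mul, mul_comm]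
    have hE3 : ∑ j ∈ Finset.range m, (ls.getD j 0) * (G.card / (2 * N))
        ≤ ∑ j ∈ Finset.range m, (ls.getD j 0) *
          ((G.filter (fun g => g (q j).1 = (q j).2 ∧
            ((Finset.range j).filter (fun j' => g (q j').1 = (q j').2)).card < ℓ)).card : ℝ) := by
      refine Finset.sum_le_sum (fun j hj => ?_)
      refine mul_le_mul_of_nonneg_left (stepB j (Finset.mem_range.1 hj)) (getD_nonneg hnn j)
    have : ∑ j ∈ Finset.range m, (ls.getD j 0) * (G.card / (2 * N))
        = (G.card : ℝ) / (2 * N) * Sm := by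
      rw [hSm, ← Finset.sum_mul]
      ring
    linarith
  -- comparison of S with Sm
  have hScomp : S ≤ (1 + 2 * C) * Sm := by
    have hsplit : ∑ j ∈ Finset.Ico 0 m, ls.getD j 0 + ∑ j ∈ Finset.Ico m (ℓ * N), ls.getD j 0
        = ∑ j ∈ Finset.Ico 0 (ℓ * N), ls.getD j 0 :=
      Finset.sum_Ico_consecutive _ (Nat.zero_le m) hmle
    have hS' : S = Sm + ∑ j ∈ Finset.Ico m (ℓ * N), ls.getD j 0 := by
      have e0 : ∑ j ∈ Finset.range (ℓ * N), smat a (j + 1)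
          = ∑ j ∈ Finset.range (ℓ * N), ls.getD j 0 :=
        Finset.sum_congr rfl (fun j _ => hsmat j)
      rw [hS, e0, Finset.range_eq_Ico, ← hsplit, hSm, Finset.range_eq_Ico]
    set sm := ls.getD (m - 1) 0 with hsm
    have hsm0 : 0 ≤ sm := getD_nonneg hnn _
    have htail : ∑ j ∈ Finset.Ico m (ℓ * N), ls.getD j 0 ≤ ((ℓ * N : ℕ):ℝ) * sm := by
      calc ∑ j ∈ Finset.Ico m (ℓ * N), ls.getD j 0
          ≤ ∑ _j ∈ Finset.Ico m (ℓ * N), sm := by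
            refine Finset.sum_le_sum (fun j hj => ?_)
            refine getD_anti hsorted hnn ?_
            have := (Finset.mem_Ico.1 hj).1
            omega
        _ = ((ℓ * N - m : ℕ):ℝ) * sm := by
            rw [Finset.sum_const, Nat.card_Ico, nsmul_eq_mul]
        _ ≤ ((ℓ * N : ℕ):ℝ) * sm := by
            refine mul_le_mul_of_nonneg_right ?_ hsm0
            exact_mod_cast Nat.sub_le _ _
    have hmsm : (m:ℝ) * sm ≤ Sm := by
      rw [hSm]
      calc (m:ℝ) * sm = ∑ _j ∈ Finset.range m, sm := by
            rw [Finset.sum_const, Finset.card_range, nsmul_eq_mul]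
        _ ≤ ∑ j ∈ Finset.range m, ls.getD j 0 := by
            refine Finset.sum_le_sum (fun j hj => ?_)
            refine getD_anti hsorted hnn ?_
            have := Finset.mem_range.1 hj
            omega
    have htail2 : ((ℓ * N : ℕ):ℝ) * sm ≤ 2 * C * Sm := by
      calc ((ℓ * N : ℕ):ℝ) * sm ≤ (2 * C * m) * sm :=
            mul_le_mul_of_nonneg_right hmlb hsm0
        _ = (2 * C) * ((m:ℝ) * sm) := by ring
        _ ≤ (2 * C) * Sm := by
            refine mul_le_mul_of_nonneg_left hmsm (by positivity)
    rw [hS']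
    nlinarith [htail, htail2]
  -- final arithmetic
  have hfinal1 : (1 / (32 * (1 + 2 * C) ^ 2)) * ((1 / N) * S) * G.card
      ≤ (1 / (32 * (1 + 2 * C) ^ 2)) * ((1 / N) * ((1 + 2 * C) * Sm)) * G.card := by
    have hS0 : (0:ℝ) < 1 + 2 * C := by linarith
    gcongr
  have hfinal2 : (1 / (32 * (1 + 2 * C) ^ 2)) * ((1 / N) * ((1 + 2 * C) * Sm)) * G.card
      ≤ (G.card : ℝ) / (2 * N) * Sm := by
    have e1 : (1 / (32 * (1 + 2 * C) ^ 2)) * ((1 / N) * ((1 + 2 * C) * Sm)) * G.card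
        = (Sm * G.card / N) * (1 / (32 * (1 + 2 * C))) := by
      have h0 : (1 + 2 * C) ≠ 0 := by positivity
      field_simp
    have e2 : (G.card : ℝ) / (2 * N) * Sm = (Sm * G.card / N) * (1 / 2) := by
      field_simp
    rw [e1, e2]
    refine mul_le_mul_of_nonneg_left ?_ (by positivity)
    have h32 : (2:ℝ) ≤ 32 * (1 + 2 * C) := by nlinarith
    refine one_div_le_one_div_of_le (by norm_num) h32
  refine (hfinal1.trans hfinal2).trans ?_
  exact stepC

/-- Theorem 1.1 (main theorem): for a collection `G` of maps with uniform marginals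
and pairwise correlations bounded by `C_G/N²`, the expected sum of the `ℓ` largest
order statistics of `(|a_{i g(i)}|)` is comparable to `N⁻¹ ∑_{j=1}^{ℓN} s(j)`. -/
theorem stmt5 (n N ℓ : ℕ) (hℓ : ℓ ≤ n)
    (a : Fin n → Fin N → ℝ)
    (G : Finset (Fin n → Fin N)) (hG : G.Nonempty)
    (C : ℝ) (hC : 1 ≤ C)
    (h1 : ∀ i : Fin n, ∀ j : Fin N,
      ((G.filter fun g => g i = j).card : ℝ) / G.card = 1 / N)
    (h2 : ∀ p q : Fin n × Fin N, p ≠ q →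
      ((G.filter fun g => g p.1 = p.2 ∧ g q.1 = q.2).card : ℝ) / G.card
        ≤ C / (N : ℝ) ^ 2) :
    (1 / (32 * (1 + 2 * C) ^ 2)) * ((1 / N) * ∑ j ∈ Finset.range (ℓ * N), smat a (j + 1))
      ≤ (∑ g ∈ G, ∑ k ∈ Finset.range ℓ, kmax (fun i => |a i (g i)|) (k + 1)) / G.card ∧
    (∑ g ∈ G, ∑ k ∈ Finset.range ℓ, kmax (fun i => |a i (g i)|) (k + 1)) / G.card
      ≤ (2 / N) * ∑ j ∈ Finset.range (ℓ * N), smat a (j + 1) := by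
  by_cases hN0 : N = 0
  · subst hN0
    have hn0 : n = 0 := by
      by_contra h
      obtain ⟨g, _⟩ := hG
      exact (g ⟨0, Nat.pos_of_ne_zero h⟩).elim0
    have hℓ0 : ℓ = 0 := by omega
    subst hℓ0
    simp
  · have hNpos : 0 < N := Nat.pos_of_ne_zero hN0
    have hM : (0:ℝ) < G.card := by exact_mod_cast Finset.card_pos.2 hG
    by_cases hℓ0 : ℓ = 0
    · subst hℓ0
      simp
    · have hl1 : 1 ≤ ℓ := Nat.one_le_iff_ne_zero.2 hℓ0
      constructor
      · rw [le_div_iff₀ hM]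
        exact lower_main hℓ hNpos hl1 a G hG C hC h1 h2
      · rw [div_le_iff₀ hM]
        exact upper_main hℓ hNpos hl1 a G hG h1
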